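/- arXiv:1008.4753 — 2 statements merged into one kernel-verified Lean document; each statement's English description precedes it below -/
import Mathlib

section
/- Fix m ≥ 1 and l ∈ {1,...,m-1}. Call a sequence of integers (s_1,...,s_{m-1}) admissible with center l if: (1) s_k ≥ 0 for all k; (2) s_i ≤ s_{i+1} ≤ s_i + 1 for i < l; (3) s_i ≥ s_{i+1} ≥ s_i − 1 for i ≥ l; (4) s_1 ≤ 1 and s_{m-1} ≤ 1. Then for any p ∈ {1,...,m-1}, the admissible sequences with center p are in bijection with strictly increasing tuples 0 ≤ k_1 < k_2 < ... < k_p ≤ m−1 of integers; in particular there are exactly C(m, p) admissible sequences with center p. -/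
/-- A sequence of integers (s_1, …, s_{m-1}) is admissible with center l if:
(1) s_k ≥ 0 for all k; (2) s_i ≤ s_{i+1} ≤ s_i + 1 for i < l;
(3) s_i ≥ s_{i+1} ≥ s_i − 1 for i ≥ l; (4) s_1 ≤ 1 and s_{m-1} ≤ 1. -/
def Admissible (m l : ℕ) (s : ℕ → ℤ) : Prop :=
  (∀ k, 1 ≤ k → k ≤ m - 1 → 0 ≤ s k) ∧
  (∀ i, 1 ≤ i → i < l → i ≤ m - 2 → s i ≤ s (i + 1) ∧ s (i + 1) ≤ s i + 1) ∧
  (∀ i, l ≤ i → i ≤ m - 2 → s (i + 1) ≤ s i ∧ s i - 1 ≤ s (i + 1)) ∧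
  s 1 ≤ 1 ∧ s (m - 1) ≤ 1

namespace Stmt3Aux

open Finset

/-- counting function: number of entries of `k` below `i`. -/
def cOf (p : ℕ) (k : Fin p → ℕ) (i : ℕ) : ℕ :=
  (univ.filter fun j => k j < i).card

/-- the admissible sequence attached to an increasing tuple. -/
def toSeq (p : ℕ) (k : Fin p → ℕ) (i : ℕ) : ℤ :=
  ((min i p : ℕ) : ℤ) - cOf p k i

/-- the counting function of a sequence. -/
def csOf (p : ℕ) (s : ℕ → ℤ) (i : ℕ) : ℤ := ((min i p : ℕ) : ℤ) - s i

/-- the increasing tuple attached to an admissible sequence. -/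
def toTup (m p : ℕ) (s : ℕ → ℤ) (j : ℕ) : ℕ :=
  ((Finset.Icc 1 (m - 1)).filter fun i => csOf p s i ≤ (j : ℤ)).card

variable {m p : ℕ} {k : Fin p → ℕ} {s : ℕ → ℤ}

lemma cOf_mono (k : Fin p → ℕ) : Monotone (cOf p k) := by
  intro i i' h
  apply card_le_card
  intro j hj
  simp at hj ⊢
  omega

lemma cOf_zero (k : Fin p → ℕ) : cOf p k 0 = 0 := by simp [cOf]

lemma cOf_le_p (k : Fin p → ℕ) (i : ℕ) : cOf p k i ≤ p := by
  simpa [cOf] using (card_filter_le univ fun j => k j < i)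

lemma cOf_le_i (hk : StrictMono k) (i : ℕ) : cOf p k i ≤ i := by
  have := Finset.card_le_card_of_injOn (f := k)
    (s := univ.filter fun j => k j < i) (t := Finset.range i)
    (by intro j hj; simp at hj ⊢; omega)
    (Set.InjOn.mono (Set.subset_univ _) (hk.injective.injOn))
  simpa [cOf] using this

lemma cOf_succ_le (hk : StrictMono k) (i : ℕ) : cOf p k (i + 1) ≤ cOf p k i + 1 := by
  have hsub : (univ.filter fun j => k j < i + 1) ⊆
      (univ.filter fun j => k j < i) ∪ (univ.filter fun j => k j = i) := by
    intro j hj; simp at hj ⊢; omega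
  have hone : (univ.filter fun j => k j = i).card ≤ 1 := by
    apply card_le_one.2
    intro a ha b hb
    simp at ha hb
    exact hk.injective (ha.trans hb.symm)
  calc cOf p k (i + 1) ≤ ((univ.filter fun j => k j < i) ∪ (univ.filter fun j => k j = i)).card :=
        card_le_card hsub
    _ ≤ (univ.filter fun j => k j < i).card + (univ.filter fun j => k j = i).card :=
        card_union_le _ _
    _ ≤ cOf p k i + 1 := by unfold cOf; omega

lemma cOf_eq_p (hkb : ∀ j, k j ≤ m - 1) (hm : 1 ≤ m) {i : ℕ} (hi : m ≤ i) :
    cOf p k i = p := by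
  unfold cOf
  rw [filter_true_of_mem (by intro j _; have := hkb j; omega)]
  simp

lemma lt_iff_lt_cOf (hk : StrictMono k) (j : Fin p) (i : ℕ) :
    k j < i ↔ (j : ℕ) < cOf p k i := by
  constructor
  · intro h
    have hsub : Finset.Iic j ⊆ univ.filter fun j' => k j' < i := by
      intro j' hj'
      simp only [mem_Iic] at hj'
      simp only [mem_filter, mem_univ, true_and]
      exact lt_of_le_of_lt (hk.monotone hj') h
    have := card_le_card hsub
    rw [Fin.card_Iic] at this
    unfold cOf; omega
  · intro h
    by_contra hh
    push_neg at hh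
    have hsub : (univ.filter fun j' => k j' < i) ⊆ Finset.Iio j := by
      intro j' hj'
      simp only [mem_filter, mem_univ, true_and] at hj'
      simp only [mem_Iio]
      exact hk.lt_iff_lt.1 (lt_of_lt_of_le hj' hh)
    have := card_le_card hsub
    rw [Fin.card_Iio] at this
    unfold cOf at h; omega

lemma p_le_cOf_sub_one (hk : StrictMono k) (hkb : ∀ j, k j ≤ m - 1) :
    p ≤ cOf p k (m - 1) + 1 := by
  by_contra h
  push_neg at h
  set c := cOf p k (m - 1) with hc
  have h1 : c < p := by omega
  have h2 : c + 1 < p := by omega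
  have e1 : ¬ k ⟨c, h1⟩ < m - 1 := by
    rw [lt_iff_lt_cOf hk]; simp; omega
  have e2 : k ⟨c, h1⟩ < k ⟨c + 1, h2⟩ := hk (by simp)
  have e3 := hkb ⟨c + 1, h2⟩
  omega

lemma count_lt (p : ℕ) (c : ℤ) (h0 : 0 ≤ c) (hp : c ≤ p) :
    ((univ.filter fun j : Fin p => ((j : ℕ) : ℤ) < c).card : ℤ) = c := by
  have heq : (univ.filter fun j : Fin p => ((j : ℕ) : ℤ) < c)
      = (Finset.range c.toNat).attachFin (fun x hx => by
          simp only [Finset.mem_range] at hx; omega) := by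
    ext j
    simp only [mem_filter, mem_univ, true_and, Finset.mem_attachFin, Finset.mem_range]
    omega
  rw [heq, Finset.card_attachFin, Finset.card_range]
  omega

lemma toSeq_admissible (hm2 : 2 ≤ m) (hp1 : 1 ≤ p) (hp2 : p ≤ m - 1)
    (hk : StrictMono k) (hkb : ∀ j, k j ≤ m - 1) :
    Admissible m p (toSeq p k) ∧ ∀ i, (i = 0 ∨ m ≤ i) → toSeq p k i = 0 := by
  have hle : ∀ i, cOf p k i ≤ min i p := fun i => le_min (cOf_le_i hk i) (cOf_le_p k i)
  refine ⟨⟨?_, ?_, ?_, ?_, ?_⟩, ?_⟩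
  · intro i _ _
    have := hle i
    unfold toSeq; push_cast; omega
  · intro i hi1 hip him
    have h1 := cOf_mono k (by omega : i ≤ i + 1)
    have h2 := cOf_succ_le hk i
    have e1 : min i p = i := by omega
    have e2 : min (i + 1) p = i + 1 := by omega
    unfold toSeq
    rw [e1, e2]
    push_cast
    constructor <;> omega
  · intro i hpi him
    have h1 := cOf_mono k (by omega : i ≤ i + 1)
    have h2 := cOf_succ_le hk i
    have e1 : min i p = p := by omega
    have e2 : min (i + 1) p = p := by omega
    unfold toSeq
    rw [e1, e2]
    constructor <;> omega
  · have := hle 1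
    unfold toSeq; omega
  · have h1 := p_le_cOf_sub_one hk hkb
    have e1 : min (m - 1) p = p := by omega
    unfold toSeq; rw [e1]; omega
  · intro i hi
    rcases hi with rfl | hi
    · simp [toSeq, cOf_zero]
    · have e1 : min i p = p := by omega
      have e2 := cOf_eq_p hkb (by omega) hi
      unfold toSeq; rw [e1, e2]; ring

lemma toTup_toSeq (hk : StrictMono k) (hkb : ∀ j, k j ≤ m - 1) (j : Fin p) :
    toTup m p (toSeq p k) j = k j := by
  unfold toTup
  have heq : ((Finset.Icc 1 (m - 1)).filter fun i => csOf p (toSeq p k) i ≤ ((j : ℕ) : ℤ))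
      = Finset.Icc 1 (k j) := by
    ext i
    simp only [mem_filter, Finset.mem_Icc]
    have hcof : csOf p (toSeq p k) i = (cOf p k i : ℤ) := by
      unfold csOf toSeq; ring
    rw [hcof]
    have hiff := lt_iff_lt_cOf hk j i
    have hb := hkb j
    constructor
    · rintro ⟨⟨hi1, hi2⟩, hle⟩
      refine ⟨hi1, ?_⟩
      by_contra hlt
      push_neg at hlt
      have : (j : ℕ) < cOf p k i := hiff.1 hlt
      omega
    · rintro ⟨hi1, hi2⟩
      have : ¬ k j < i := by omega
      rw [hiff] at this
      refine ⟨⟨hi1, by omega⟩, by omega⟩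
  rw [heq, Nat.card_Icc]
  omega

section B
variable (hm2 : 2 ≤ m) (hp1 : 1 ≤ p) (hp2 : p ≤ m - 1)
  (hs : Admissible m p s) (hb : ∀ i, (i = 0 ∨ m ≤ i) → s i = 0)
include hm2 hp1 hp2 hs hb

lemma cs_step : ∀ i, csOf p s i ≤ csOf p s (i + 1) ∧ csOf p s (i + 1) ≤ csOf p s i + 1 := by
  obtain ⟨h0, hup, hdown, h1, hm1⟩ := hs
  intro i
  rcases Nat.lt_or_ge i m with him | him
  · rcases Nat.eq_or_lt_of_le (Nat.zero_le i) with hi0 | hi1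
    · have hs0 : s 0 = 0 := hb 0 (Or.inl rfl)
      have hs1a : 0 ≤ s 1 := h0 1 le_rfl (by omega)
      have e0 : min 0 p = 0 := by omega
      have e1 : min 1 p = 1 := by omega
      subst hi0
      unfold csOf
      rw [e0, e1, hs0]
      push_cast
      omega
    · rcases Nat.lt_or_ge i p with hip | hip
      · have := hup i (by omega) hip (by omega)
        have e1 : min i p = i := by omega
        have e2 : min (i + 1) p = i + 1 := by omega
        unfold csOf; rw [e1, e2]; push_cast; omega
      · rcases Nat.lt_or_ge i (m - 1) with him1 | him1
        · have := hdown i hip (by omega)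
          have e1 : min i p = p := by omega
          have e2 : min (i + 1) p = p := by omega
          unfold csOf; rw [e1, e2]; omega
        · have hieq : i = m - 1 := by omega
          have hsm : s (i + 1) = 0 := hb (i + 1) (Or.inr (by omega))
          have hsa : 0 ≤ s i := h0 i (by omega) (by omega)
          have hsb : s i ≤ 1 := by rw [hieq]; exact hm1
          have e1 : min i p = p := by omega
          have e2 : min (i + 1) p = p := by omega
          unfold csOf; rw [e1, e2, hsm]; omega
  · have ha : s i = 0 := hb i (Or.inr him)
    have hc : s (i + 1) = 0 := hb (i + 1) (Or.inr (by omega))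
    have e1 : min i p = p := by omega
    have e2 : min (i + 1) p = p := by omega
    unfold csOf; rw [e1, e2, ha, hc]
    omega

lemma cs_mono : Monotone (csOf p s) :=
  monotone_nat_of_le_succ fun i => (cs_step hm2 hp1 hp2 hs hb i).1

omit hm2 hp1 hp2 hs in
lemma cs_zero : csOf p s 0 = 0 := by
  have := hb 0 (Or.inl rfl)
  unfold csOf
  rw [this]
  simp

omit hp1 hs in
lemma cs_eq_p {i : ℕ} (hi : m ≤ i) : csOf p s i = p := by
  have := hb i (Or.inr hi)
  have e1 : min i p = p := by omega
  unfold csOf; rw [e1, this]; ring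

lemma cs_nonneg (i : ℕ) : 0 ≤ csOf p s i := by
  have := cs_mono hm2 hp1 hp2 hs hb (Nat.zero_le i)
  rw [cs_zero hb] at this
  exact this

lemma cs_le_p (i : ℕ) : csOf p s i ≤ p := by
  have h1 := cs_mono hm2 hp1 hp2 hs hb (Nat.le_add_right i m)
  rwa [cs_eq_p hm2 hp2 hb (by omega : m ≤ i + m)] at h1

lemma cs_exists {v : ℕ} (hv1 : 1 ≤ v) (hvp : v < p) :
    ∃ i, 1 ≤ i ∧ i ≤ m - 1 ∧ csOf p s i = v := by
  have hex : ∃ i, (v : ℤ) ≤ csOf p s i :=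
    ⟨m, by rw [cs_eq_p hm2 hp2 hb le_rfl]; exact_mod_cast hvp.le⟩
  classical
  set i0 := Nat.find hex with hi0
  have hfind : (v : ℤ) ≤ csOf p s i0 := Nat.find_spec hex
  have hne0 : i0 ≠ 0 := by
    intro h
    rw [h, cs_zero hb] at hfind
    exact_mod_cast absurd hfind (by push_cast; omega)
  have hmin : ¬ (v : ℤ) ≤ csOf p s (i0 - 1) := Nat.find_min hex (by omega)
  have hstep := (cs_step hm2 hp1 hp2 hs hb (i0 - 1)).2
  have hstep' : csOf p s i0 ≤ csOf p s (i0 - 1) + 1 := by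
    have : i0 - 1 + 1 = i0 := by omega
    rwa [this] at hstep
  have heq : csOf p s i0 = v := by omega
  refine ⟨i0, by omega, ?_, heq⟩
  by_contra h
  push_neg at h
  have : csOf p s i0 = p := cs_eq_p hm2 hp2 hb (by omega)
  rw [heq] at this
  exact_mod_cast absurd this (by push_cast; omega)

omit hm2 hp1 hp2 hs hb in
lemma toTup_le (j : ℕ) : toTup m p s j ≤ m - 1 := by
  have := card_filter_le (Finset.Icc 1 (m - 1)) fun i => csOf p s i ≤ (j : ℤ)
  rw [Nat.card_Icc] at this
  unfold toTup
  omega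

lemma toTup_strictMono {j1 j2 : ℕ} (h12 : j1 < j2) (hj2 : j2 < p) :
    toTup m p s j1 < toTup m p s j2 := by
  apply card_lt_card
  refine (Finset.ssubset_iff_of_subset
    (monotone_filter_right _ (fun i _ (h : csOf p s i ≤ (j1 : ℤ)) => by omega))).2 ?_
  obtain ⟨i, hi1, hi2, hieq⟩ := cs_exists hm2 hp1 hp2 hs hb (v := j1 + 1) (by omega) (by omega)
  refine ⟨i, ?_, ?_⟩
  · simp only [mem_filter, Finset.mem_Icc]
    refine ⟨⟨hi1, hi2⟩, by rw [hieq]; push_cast; omega⟩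
  · simp only [mem_filter, Finset.mem_Icc, not_and]
    intro _
    rw [hieq]
    push_cast
    omega

lemma toTup_lt_iff {j : ℕ} (hj : j < p) {i : ℕ} (hi : 1 ≤ i) :
    toTup m p s j < i ↔ (j : ℤ) < csOf p s i := by
  constructor
  · intro h
    by_contra hh
    push_neg at hh
    have him : i ≤ m - 1 := by
      by_contra hmm
      push_neg at hmm
      have : csOf p s i = p := cs_eq_p hm2 hp2 hb (by omega)
      rw [this] at hh
      have : (j : ℤ) < p := by exact_mod_cast hj
      omega
    have hsub : Finset.Icc 1 i ⊆ (Finset.Icc 1 (m - 1)).filter fun i' => csOf p s i' ≤ (j : ℤ) := by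
      intro i' hi'
      simp only [Finset.mem_Icc] at hi'
      simp only [mem_filter, Finset.mem_Icc]
      have := cs_mono hm2 hp1 hp2 hs hb hi'.2
      exact ⟨⟨hi'.1, by omega⟩, le_trans this hh⟩
    have := card_le_card hsub
    rw [Nat.card_Icc] at this
    unfold toTup at h
    omega
  · intro h
    have hsub : ((Finset.Icc 1 (m - 1)).filter fun i' => csOf p s i' ≤ (j : ℤ)) ⊆
        Finset.Icc 1 (i - 1) := by
      intro i' hi'
      simp only [mem_filter, Finset.mem_Icc] at hi'
      simp only [Finset.mem_Icc]
      refine ⟨hi'.1.1, ?_⟩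
      by_contra hgt
      push_neg at hgt
      have : csOf p s i ≤ csOf p s i' := cs_mono hm2 hp1 hp2 hs hb (by omega)
      omega
    have := card_le_card hsub
    rw [Nat.card_Icc] at this
    unfold toTup
    omega

lemma cOf_toTup (i : ℕ) :
    (cOf p (fun j : Fin p => toTup m p s j) i : ℤ) = csOf p s i := by
  rcases Nat.eq_zero_or_pos i with rfl | hi
  · rw [cs_zero hb]
    simp [cOf]
  · unfold cOf
    have heq : (univ.filter fun j : Fin p => toTup m p s j < i)
        = univ.filter fun j : Fin p => ((j : ℕ) : ℤ) < csOf p s i := by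
      ext j
      simp only [mem_filter, mem_univ, true_and]
      exact toTup_lt_iff hm2 hp1 hp2 hs hb j.2 hi
    rw [heq]
    have hcount := count_lt p (csOf p s i) (cs_nonneg hm2 hp1 hp2 hs hb i)
      (cs_le_p hm2 hp1 hp2 hs hb i)
    exact hcount

lemma toSeq_toTup (i : ℕ) : toSeq p (fun j : Fin p => toTup m p s j) i = s i := by
  have h := cOf_toTup hm2 hp1 hp2 hs hb i
  unfold csOf at h
  unfold toSeq
  omega

end B

noncomputable def seqEquivTup (hm2 : 2 ≤ m) (hp1 : 1 ≤ p) (hp2 : p ≤ m - 1) :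
    {s : ℕ → ℤ // Admissible m p s ∧ ∀ k, (k = 0 ∨ m ≤ k) → s k = 0} ≃
      {k : Fin p → ℕ // StrictMono k ∧ ∀ j, k j ≤ m - 1} where
  toFun s := ⟨fun j => toTup m p s.1 j,
    fun a b hab => toTup_strictMono hm2 hp1 hp2 s.2.1 s.2.2 (Fin.lt_def.1 hab) b.2,
    fun j => toTup_le j⟩
  invFun k := ⟨toSeq p k.1, toSeq_admissible hm2 hp1 hp2 k.2.1 k.2.2⟩
  left_inv s := Subtype.ext (funext fun i => toSeq_toTup hm2 hp1 hp2 s.2.1 s.2.2 i)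
  right_inv k := Subtype.ext (funext fun j => toTup_toSeq k.2.1 k.2.2 j)

lemma val_orderEmbOfFin_image (hm : 1 ≤ m) (k : Fin p → ℕ) (hk : StrictMono k)
    (hkb : ∀ j, k j ≤ m - 1)
    (h : (univ.image (fun j => (⟨k j, by have := hkb j; omega⟩ : Fin m))).card = p) (j : Fin p) :
    (((univ.image (fun j => (⟨k j, by have := hkb j; omega⟩ : Fin m))).orderEmbOfFin h) j).val
      = k j := by
  set g : Fin p → Fin m := fun j => (⟨k j, by have := hkb j; omega⟩ : Fin m) with hg
  have hmem : ∀ x, g x ∈ univ.image g := fun x => mem_image_of_mem g (mem_univ x)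
  have hmono : StrictMono g := fun a b hab => by
    rw [Fin.lt_def]
    exact hk hab
  have huniq := Finset.orderEmbOfFin_unique h hmem hmono
  rw [← congrFun huniq j]

lemma image_orderEmbOfFin (S : Finset (Fin m)) (hS : S.card = p) (f : Fin p → Fin m)
    (hf : ∀ j, f j = S.orderEmbOfFin hS j) : univ.image f = S := by
  apply Finset.coe_injective
  rw [coe_image, coe_univ, Set.image_univ]
  have : f = fun j => S.orderEmbOfFin hS j := funext hf
  rw [this]
  exact S.range_orderEmbOfFin hS

noncomputable def tupEquivFinset (hm : 1 ≤ m) :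
    {k : Fin p → ℕ // StrictMono k ∧ ∀ j, k j ≤ m - 1} ≃ {S : Finset (Fin m) // S.card = p} where
  toFun k := ⟨univ.image (fun j => (⟨k.1 j, by have := k.2.2 j; omega⟩ : Fin m)), by
    rw [Finset.card_image_of_injective _
      (fun a b hab => k.2.1.injective (congrArg Fin.val hab))]
    simp⟩
  invFun S := ⟨fun j => ((S.1.orderEmbOfFin S.2) j).val,
    fun a b hab => Fin.lt_def.1 ((S.1.orderEmbOfFin S.2).strictMono hab),
    fun j => by
      show ((S.1.orderEmbOfFin S.2) j).val ≤ m - 1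
      have := ((S.1.orderEmbOfFin S.2) j).2
      omega⟩
  left_inv := by
    rintro ⟨k, hk, hkb⟩
    apply Subtype.ext
    funext j
    exact val_orderEmbOfFin_image hm k hk hkb _ j
  right_inv := by
    rintro ⟨S, hS⟩
    apply Subtype.ext
    exact image_orderEmbOfFin S hS _ (fun j => Fin.ext rfl)

end Stmt3Aux

/-- For p ∈ {1,…,m-1}, admissible sequences with center p are in bijection
with strictly increasing tuples 0 ≤ k_1 < … < k_p ≤ m−1; in particular there are exactly
C(m,p) admissible sequences with center p. -/
theorem stmt3 (m p : ℕ) (hm : 1 ≤ m) (hp1 : 1 ≤ p) (hp2 : p ≤ m - 1) :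
    Nonempty
      ({s : ℕ → ℤ // Admissible m p s ∧ ∀ k, (k = 0 ∨ m ≤ k) → s k = 0} ≃
        {k : Fin p → ℕ // StrictMono k ∧ ∀ j, k j ≤ m - 1}) ∧
    Nat.card {s : ℕ → ℤ // Admissible m p s ∧ ∀ k, (k = 0 ∨ m ≤ k) → s k = 0}
      = m.choose p := by
  have hm2 : 2 ≤ m := by omega
  have E1 := Stmt3Aux.seqEquivTup (m := m) (p := p) hm2 hp1 hp2
  have E2 := Stmt3Aux.tupEquivFinset (m := m) (p := p) hm
  refine ⟨⟨E1⟩, ?_⟩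
  rw [Nat.card_congr (E1.trans E2), Nat.card_eq_fintype_card, Fintype.card_finset_len,
    Fintype.card_fin]
end

section
/- Fix m ≥ 1 and p ∈ {1,...,m−1}. In the polynomial ring ℚ[q_1,...,q_{m-1}], the coefficient of z^p in ∏_{k=0}^{m-1}(1 + (∏_{j=1}^k q_j) z) equals (∏_{j=1}^{p-1} q_j^{p-j}) · Σ_α q^α, where the sum runs over all admissible sequences α = (s_1,...,s_{m-1}) with center p, and q^α := ∏_{k=1}^{m-1} q_k^{s_k}. -/
open Finset Polynomial MvPolynomial

section Aux

/-- Coefficient of `X^p` in a product of linear factors `C (f k) * X + 1`. -/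
lemma coeff_prod_CXadd1 {R : Type*} [CommRing R] (f : ℕ → R) (s : Finset ℕ) (p : ℕ) :
    (∏ k ∈ s, (Polynomial.C (f k) * Polynomial.X + 1)).coeff p
      = ∑ T ∈ s.powersetCard p, ∏ k ∈ T, f k := by
  classical
  induction s using Finset.induction_on generalizing p with
  | empty =>
    rcases p with _ | p
    · simp
    · rw [Finset.powersetCard_eq_empty.2 (by simp)]
      simp [Polynomial.coeff_one]
  | insert a s ha ih =>
    rw [Finset.prod_insert ha, add_mul, one_mul, Polynomial.coeff_add]
    rcases p with _ | p
    · rw [Finset.powersetCard_zero]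
      simp [Polynomial.mul_coeff_zero, ih]
    · rw [Finset.powersetCard_succ_insert ha, Finset.sum_union, Finset.sum_image]
      · rw [mul_assoc, Polynomial.coeff_C_mul, Polynomial.coeff_X_mul, ih, ih,
          Finset.mul_sum, add_comm]
        congr 1
        refine Finset.sum_congr rfl fun t ht => ?_
        rw [Finset.prod_insert fun hat => ha ((Finset.mem_powersetCard.1 ht).1 hat)]
      · intro t ht t' ht' h
        have hat : a ∉ t := fun hat => ha ((Finset.mem_powersetCard.1 ht).1 hat)
        have hat' : a ∉ t' := fun hat => ha ((Finset.mem_powersetCard.1 ht').1 hat)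
        have := congrArg (Finset.erase · a) h
        simpa [Finset.erase_insert hat, Finset.erase_insert hat'] using this
      · rw [Finset.disjoint_right]
        rintro t ht ht'
        obtain ⟨t₀, ht₀, rfl⟩ := Finset.mem_image.1 ht
        exact ha ((Finset.mem_powersetCard.1 ht').1 (Finset.mem_insert_self a t₀))

/-- number of elements of `T` that are `≥ k` -/
def ecount (T : Finset ℕ) (k : ℕ) : ℕ := (T.filter (fun x => k ≤ x)).card

lemma ecount_step (T : Finset ℕ) (k : ℕ) :
    ecount T k = ecount T (k + 1) + (if k ∈ T then 1 else 0) := by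
  classical
  unfold ecount
  have h1 : T.filter (fun x => k ≤ x)
      = T.filter (fun x => k + 1 ≤ x) ∪ T.filter (fun x => x = k) := by
    rw [← Finset.filter_or]
    exact Finset.filter_congr (by intro x _; constructor <;> intro h <;> omega)
  rw [h1, Finset.card_union_of_disjoint, Finset.filter_eq']
  · split <;> simp
  · rw [Finset.disjoint_right]
    intro x hx hx'
    simp only [Finset.mem_filter] at hx hx'
    omega

lemma ecount_le_card (T : Finset ℕ) (k : ℕ) : ecount T k ≤ T.card :=
  Finset.card_filter_le _ _

lemma ecount_ge (T : Finset ℕ) (m k : ℕ) (hT : T ⊆ Finset.range m) :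
    T.card ≤ ecount T k + k := by
  classical
  have h := Finset.card_filter_add_card_filter_not (s := T) (p := fun x => k ≤ x)
  have h2 : (T.filter (fun x => ¬ k ≤ x)).card ≤ k := by
    refine le_trans (Finset.card_le_card (t := Finset.range k) ?_) (by simp)
    intro x hx
    simp only [Finset.mem_filter] at hx
    exact Finset.mem_range.2 (by omega)
  unfold ecount; omega

lemma ecount_eq_zero (T : Finset ℕ) (m k : ℕ) (hT : T ⊆ Finset.range m) (hk : m ≤ k) :
    ecount T k = 0 := by
  classical
  unfold ecount
  rw [Finset.card_eq_zero, Finset.filter_eq_empty_iff]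
  intro x hx
  have := Finset.mem_range.1 (hT hx)
  omega

/-- descent count over `Ico a b` for a unit-step nonincreasing sequence -/
lemma card_descents (E : ℕ → ℕ) (hE : ∀ k, E (k + 1) ≤ E k ∧ E k ≤ E (k + 1) + 1)
    (a b : ℕ) (hab : a ≤ b) :
    ((Finset.Ico a b).filter (fun x => E (x + 1) < E x)).card + E b = E a := by
  classical
  induction b, hab using Nat.le_induction with
  | base => simp
  | succ b hab ih =>
    rw [Nat.Ico_succ_right_eq_insert_Ico hab, Finset.filter_insert]
    have hb : b ∉ Finset.Ico a b := by simp
    have h := hE b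
    split
    · rw [Finset.card_insert_of_notMem (fun h => hb (Finset.mem_of_mem_filter _ h))]
      omega
    · omega

lemma ecount_step_le (T : Finset ℕ) (k : ℕ) :
    ecount T (k + 1) ≤ ecount T k ∧ ecount T k ≤ ecount T (k + 1) + 1 := by
  have := ecount_step T k; split at this <;> omega

lemma ecount_zero (T : Finset ℕ) : ecount T 0 = T.card := by
  unfold ecount
  congr 1
  exact Finset.filter_true_of_mem (by intro x _; omega)

/-- the admissible sequence attached to a subset `T` -/
def sfun (p : ℕ) (T : Finset ℕ) : ℕ → ℤ := fun k => (ecount T k : ℤ) - ((p - k : ℕ) : ℤ)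

lemma sfun_mem (m p : ℕ) (hm : 1 ≤ m) (hp1 : 1 ≤ p) (hp2 : p ≤ m - 1) (T : Finset ℕ)
    (hT : T ⊆ Finset.range m) (hcard : T.card = p) :
    Admissible m p (sfun p T) ∧ ∀ k, (k = 0 ∨ m ≤ k) → sfun p T k = 0 := by
  have hm2 : 2 ≤ m := by omega
  refine ⟨⟨?_, ?_, ?_, ?_, ?_⟩, ?_⟩
  · intro k _ _
    have := ecount_ge T m k hT
    simp only [sfun]; omega
  · intro i _ hi _
    have h := ecount_step_le T i
    simp only [sfun]
    have hc : p - i = (p - (i + 1)) + 1 := by omega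
    constructor <;> omega
  · intro i hi _
    have h := ecount_step_le T i
    simp only [sfun]
    have hc : p - i = 0 := by omega
    have hc' : p - (i + 1) = 0 := by omega
    constructor <;> omega
  · have := ecount_le_card T 1
    simp only [sfun]; omega
  · have h := ecount_step_le T (m - 1)
    have he : m - 1 + 1 = m := by omega
    rw [he] at h
    have h0 := ecount_eq_zero T m m hT le_rfl
    have hc : p - (m - 1) = 0 := by omega
    simp only [sfun]; omega
  · intro k hk
    simp only [sfun]
    rcases hk with rfl | hk
    · rw [ecount_zero, hcard]; omega
    · rw [ecount_eq_zero T m k hT hk]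
      have : p - k = 0 := by omega
      omega

lemma sfun_inj (m p : ℕ) (T T' : Finset ℕ)
    (hT : T ⊆ Finset.range m) (hT' : T' ⊆ Finset.range m)
    (h : sfun p T = sfun p T') : T = T' := by
  have he : ∀ k, ecount T k = ecount T' k := by
    intro k
    have := congrFun h k
    simp only [sfun] at this
    omega
  ext x
  have h1 := ecount_step T x
  have h2 := ecount_step T' x
  have hk := he x
  have hk1 := he (x + 1)
  constructor <;> intro hx <;>
    [skip; skip] <;> by_contra hc <;> simp [hx, hc] at h1 h2 <;> omega

lemma exists_T (m p : ℕ) (hm : 1 ≤ m) (hp1 : 1 ≤ p) (hp2 : p ≤ m - 1) (s : ℕ → ℤ)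
    (hA : Admissible m p s) (hz : ∀ k, (k = 0 ∨ m ≤ k) → s k = 0) :
    ∃ T ⊆ Finset.range m, T.card = p ∧ sfun p T = s := by
  classical
  have hm2 : 2 ≤ m := by omega
  obtain ⟨h1, h2, h3, h4, h5⟩ := hA
  set E : ℕ → ℕ := fun k => (s k).toNat + (p - k) with hE
  have hs0 : s 0 = 0 := hz 0 (Or.inl rfl)
  have hstep : ∀ k, E (k + 1) ≤ E k ∧ E k ≤ E (k + 1) + 1 := by
    intro k
    rcases eq_or_ne k 0 with rfl | hk0
    · have ha := h1 1 le_rfl (by omega)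
      have hb := h4
      have hc : s (0 + 1) = s 1 := by norm_num
      simp only [hE]; omega
    rcases le_or_gt m k with hk | hk
    · have ha := hz k (Or.inr hk)
      have hb := hz (k + 1) (Or.inr (by omega))
      simp only [hE]; omega
    rcases eq_or_ne k (m - 1) with hk1 | hk1
    · have hmm : k + 1 = m := by omega
      have ha := hz (k + 1) (Or.inr (by omega))
      have hb := h1 k (by omega) (by omega)
      have hc : s k ≤ 1 := by rw [hk1]; exact h5
      simp only [hE]; omega
    have ha := h1 k (by omega) (by omega)
    have hb := h1 (k + 1) (by omega) (by omega)
    rcases lt_or_ge k p with hkp | hkp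
    · have hc := h2 k (by omega) hkp (by omega)
      simp only [hE]; omega
    · have hc := h3 k hkp (by omega)
      simp only [hE]; omega
  have hEm : E m = 0 := by
    have := hz m (Or.inr le_rfl)
    simp only [hE]; omega
  have hE0 : E 0 = p := by simp only [hE]; omega
  refine ⟨(Finset.range m).filter (fun x => E (x + 1) < E x), Finset.filter_subset _ _, ?_, ?_⟩
  · have := card_descents E hstep 0 m (by omega)
    rw [Finset.range_eq_Ico]
    omega
  · have hec : ∀ k, k ≤ m →
        ecount ((Finset.range m).filter (fun x => E (x + 1) < E x)) k = E k := by
      intro k hk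
      have hfe : ((Finset.range m).filter (fun x => E (x + 1) < E x)).filter (fun x => k ≤ x)
          = (Finset.Ico k m).filter (fun x => E (x + 1) < E x) := by
        ext x
        simp only [Finset.mem_filter, Finset.mem_range, Finset.mem_Ico]
        tauto
      have := card_descents E hstep k m hk
      unfold ecount
      rw [hfe]
      omega
    funext k
    rcases le_or_gt k m with hk | hk
    · have h := hec k hk
      have hnn : 0 ≤ s k := by
        rcases eq_or_ne k 0 with rfl | h0
        · omega
        rcases eq_or_ne k m with rfl | hm'
        · rw [hz k (Or.inr le_rfl)]
        · exact h1 k (by omega) (by omega)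
      simp only [sfun, hE] at h ⊢
      omega
    · have h := ecount_eq_zero ((Finset.range m).filter (fun x => E (x + 1) < E x)) m k
        (Finset.filter_subset _ _) (by omega)
      have := hz k (Or.inr (by omega))
      simp only [sfun]
      omega

end Aux

/-- In ℚ[q_1,…,q_{m-1}], the coefficient of z^p in
∏_{k=0}^{m-1}(1 + (∏_{j=1}^k q_j) z) equals (∏_{j=1}^{p-1} q_j^{p-j}) · Σ_α q^α, the sum
running over all admissible sequences α = (s_1,…,s_{m-1}) with center p, where
q^α := ∏_{k=1}^{m-1} q_k^{s_k}. -/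
theorem stmt5 (m p : ℕ) (hm : 1 ≤ m) (hp1 : 1 ≤ p) (hp2 : p ≤ m - 1) :
    (∏ k ∈ Finset.range m,
        (Polynomial.C (∏ j ∈ Finset.Icc 1 k, (MvPolynomial.X j : MvPolynomial ℕ ℚ)) *
          Polynomial.X + 1)).coeff p
      = (∏ j ∈ Finset.Icc 1 (p - 1), (MvPolynomial.X j : MvPolynomial ℕ ℚ) ^ (p - j)) *
        ∑ᶠ s ∈ {s : ℕ → ℤ | Admissible m p s ∧ ∀ k, (k = 0 ∨ m ≤ k) → s k = 0},
          ∏ k ∈ Finset.Icc 1 (m - 1), (MvPolynomial.X k : MvPolynomial ℕ ℚ) ^ (s k).toNat := by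
  classical
  rw [coeff_prod_CXadd1]
  have hset : {s : ℕ → ℤ | Admissible m p s ∧ ∀ k, (k = 0 ∨ m ≤ k) → s k = 0}
      = ↑(((Finset.range m).powersetCard p).image (sfun p)) := by
    ext s
    simp only [Set.mem_setOf_eq, Finset.coe_image, Set.mem_image, Finset.mem_coe,
      Finset.mem_powersetCard]
    constructor
    · rintro ⟨hA, hz⟩
      obtain ⟨T, hT, hc, hs⟩ := exists_T m p hm hp1 hp2 s hA hz
      exact ⟨T, ⟨hT, hc⟩, hs⟩
    · rintro ⟨T, ⟨hT, hc⟩, rfl⟩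
      exact sfun_mem m p hm hp1 hp2 T hT hc
  rw [hset, finsum_mem_coe_finset,
    Finset.sum_image (fun T hT T' hT' h => sfun_inj m p T T'
      (Finset.mem_powersetCard.1 hT).1 (Finset.mem_powersetCard.1 hT').1 h),
    Finset.mul_sum]
  refine Finset.sum_congr rfl fun T hT => ?_
  obtain ⟨hTsub, hTcard⟩ := Finset.mem_powersetCard.1 hT
  have hL : ∏ k ∈ T, ∏ j ∈ Finset.Icc 1 k, (MvPolynomial.X j : MvPolynomial ℕ ℚ)
      = ∏ j ∈ Finset.Icc 1 (m - 1), (MvPolynomial.X j : MvPolynomial ℕ ℚ) ^ ecount T j := by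
    rw [Finset.prod_comm' (t' := Finset.Icc 1 (m - 1))
      (s' := fun j => T.filter (fun x => j ≤ x)) ?hcond]
    case hcond =>
      intro k j
      simp only [Finset.mem_Icc, Finset.mem_filter]
      constructor
      · rintro ⟨hk, h1j, hjk⟩
        have := Finset.mem_range.1 (hTsub hk)
        exact ⟨⟨hk, hjk⟩, h1j, by omega⟩
      · rintro ⟨⟨hk, hjk⟩, h1j, _⟩
        exact ⟨hk, h1j, hjk⟩
    refine Finset.prod_congr rfl fun j _ => ?_
    rw [Finset.prod_const]
    rfl
  have hR : (∏ j ∈ Finset.Icc 1 (p - 1), (MvPolynomial.X j : MvPolynomial ℕ ℚ) ^ (p - j)) *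
        ∏ k ∈ Finset.Icc 1 (m - 1), (MvPolynomial.X k : MvPolynomial ℕ ℚ) ^ (sfun p T k).toNat
      = ∏ j ∈ Finset.Icc 1 (m - 1), (MvPolynomial.X j : MvPolynomial ℕ ℚ) ^ ecount T j := by
    have h1 : ∏ j ∈ Finset.Icc 1 (p - 1), (MvPolynomial.X j : MvPolynomial ℕ ℚ) ^ (p - j)
        = ∏ j ∈ Finset.Icc 1 (m - 1), (MvPolynomial.X j : MvPolynomial ℕ ℚ) ^ (p - j) := by
      refine Finset.prod_subset (Finset.Icc_subset_Icc_right (by omega)) fun j hj hj' => ?_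
      simp only [Finset.mem_Icc] at hj hj'
      have : p - j = 0 := by omega
      rw [this, pow_zero]
    rw [h1, ← Finset.prod_mul_distrib]
    refine Finset.prod_congr rfl fun j _ => ?_
    rw [← pow_add]
    congr 1
    have h2 := ecount_ge T m j hTsub
    simp only [sfun]
    omega
  rw [hL]
  exact hR.symm
end
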